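/- Fix an integer K ≥ 1 and set 𝖽_j := sinh(a_j·E)·cosh((1−a_j)·E) for 1 ≤ j ≤ K. Then for every integer 1 ≤ i ≤ K−1, Π_{j=1}^{i} g_{j,K}(𝖽_j) = (sinh(ᾱ_i·E)/(i/K))^{i/K} · (cosh(ᾱ_i·E)/(1 − i/K))^{1 − i/K}, and moreover Π_{j=1}^{K} g_{j,K}(𝖽_j) = 1. -/

import Mathlib

open Real Finset

/-- The ground-state energy `E = log(1+√2) = arcsinh(1)`, so that `sinh E = 1`. -/
noncomputable def groundE : ℝ := Real.log (1 + Real.sqrt 2)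

/-- `ᾱ_i = (1/2)·(1 + arsinh(2i/K − 1)/E)` for `0 ≤ i ≤ K`. -/
noncomputable def abar (K i : ℕ) : ℝ :=
  (1 / 2) * (1 + Real.arsinh (2 * (i : ℝ) / (K : ℝ) - 1) / groundE)

/-- `a_i = ᾱ_i − ᾱ_{i−1}` for `1 ≤ i ≤ K`. -/
noncomputable def aseq (K i : ℕ) : ℝ := abar K i - abar K (i - 1)

/-- `φ(x) = x^x` (real power, with the convention `0^0 = 1`). -/
noncomputable def phiFun (x : ℝ) : ℝ := x ^ x

/-- The function `g_{j,K}` from the optimal Hamming-distance analysis. -/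
noncomputable def gFun (K j : ℕ) (x : ℝ) : ℝ :=
  (Real.sinh (aseq K j * groundE) ^ x * Real.cosh (aseq K j * groundE) ^ (1 - x) *
      phiFun (((j : ℝ) - 1) / (K : ℝ)) * phiFun (1 - ((j : ℝ) - 1) / (K : ℝ))) /
    (phiFun (x / 2 - 1 / (2 * (K : ℝ))) *
      phiFun (((j : ℝ) - 1) / (K : ℝ) - x / 2 + 1 / (2 * (K : ℝ))) *
      phiFun (x / 2 + 1 / (2 * (K : ℝ))) *
      phiFun (1 - ((j : ℝ) - 1) / (K : ℝ) - x / 2 - 1 / (2 * (K : ℝ))))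

/-- The optimal Hamming distances `𝖽_j = sinh(a_j·E)·cosh((1−a_j)·E)`, 1-based. -/
noncomputable def dNum (K j : ℕ) : ℝ :=
  Real.sinh (aseq K j * groundE) * Real.cosh ((1 - aseq K j) * groundE)

/-- **Evolution Lemma**: for `1 ≤ i ≤ K−1`,
`Π_{j=1}^{i} g_{j,K}(𝖽_j) = (sinh(ᾱ_i·E)/(i/K))^{i/K} · (cosh(ᾱ_i·E)/(1−i/K))^{1−i/K}`,
and the full product `Π_{j=1}^{K} g_{j,K}(𝖽_j)` equals `1`. -/
lemma groundE_eq : groundE = Real.arsinh 1 := by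
  unfold groundE Real.arsinh
  norm_num

lemma groundE_pos : 0 < groundE := by
  rw [groundE_eq]; exact Real.arsinh_pos_iff.mpr one_pos

lemma sinh_groundE : Real.sinh groundE = 1 := by
  rw [groundE_eq, Real.sinh_arsinh]

lemma abar_mul (K i : ℕ) :
    2 * (abar K i * groundE) - groundE = Real.arsinh (2 * (i : ℝ) / (K : ℝ) - 1) := by
  unfold abar
  have hE := groundE_pos.ne'
  field_simp
  ring

lemma sinh_abar (K i : ℕ) :
    Real.sinh (2 * (abar K i * groundE) - groundE) = 2 * (i : ℝ) / (K : ℝ) - 1 := by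
  rw [abar_mul, Real.sinh_arsinh]

lemma abar_mono (K : ℕ) {i i' : ℕ} (h : i ≤ i') : abar K i ≤ abar K i' := by
  unfold abar
  have harr : Real.arsinh (2 * (i : ℝ) / (K : ℝ) - 1) ≤ Real.arsinh (2 * (i' : ℝ) / (K : ℝ) - 1) := by
    apply Real.arsinh_le_arsinh.mpr
    have hi : (i:ℝ) ≤ (i':ℝ) := by exact_mod_cast h
    have hKnn : (0:ℝ) ≤ (K:ℝ) := Nat.cast_nonneg K
    rcases hKnn.eq_or_lt with hk | hk
    · rw [← hk]; simp
    · have : 2*(i:ℝ)/(K:ℝ) ≤ 2*(i':ℝ)/(K:ℝ) := by gcongr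
      linarith
  have := (div_le_div_iff_of_pos_right groundE_pos).mpr harr
  linarith

lemma abar_strict (K : ℕ) (hK : 0 < K) {i i' : ℕ} (h : i < i') : abar K i < abar K i' := by
  unfold abar
  have hKpos : (0:ℝ) < (K:ℝ) := by exact_mod_cast hK
  have harr : Real.arsinh (2 * (i : ℝ) / (K : ℝ) - 1) < Real.arsinh (2 * (i' : ℝ) / (K : ℝ) - 1) := by
    apply Real.arsinh_lt_arsinh.mpr
    have hi : (i:ℝ) < (i':ℝ) := by exact_mod_cast h
    have : 2*(i:ℝ)/(K:ℝ) < 2*(i':ℝ)/(K:ℝ) := by gcongr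
    linarith
  have := (div_lt_div_iff_of_pos_right groundE_pos).mpr harr
  linarith

lemma abar_zero (K : ℕ) : abar K 0 = 0 := by
  unfold abar
  rw [show 2*((0:ℕ):ℝ)/(K:ℝ) - 1 = -1 by norm_num,
    show (-1:ℝ) = -(1:ℝ) by norm_num, Real.arsinh_neg, ← groundE_eq, neg_div,
    div_self groundE_pos.ne']
  ring

lemma abar_K (K : ℕ) (hK : 0 < K) : abar K K = 1 := by
  unfold abar
  have hKpos : (K:ℝ) ≠ 0 := by positivity
  rw [show 2*((K:ℕ):ℝ)/(K:ℝ) - 1 = 1 by field_simp; ring, ← groundE_eq,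
    div_self groundE_pos.ne']
  ring

lemma abar_nonneg (K i : ℕ) : 0 ≤ abar K i := by
  have := abar_mono K (Nat.zero_le i)
  rw [abar_zero] at this
  exact this

lemma abar_le_one (K : ℕ) (hK : 0 < K) {i : ℕ} (h : i ≤ K) : abar K i ≤ 1 := by
  have := abar_mono K h
  rw [abar_K K hK] at this
  exact this

/- generic hyperbolic identities -/

lemma key_u (E A B k j : ℝ)
    (hA : Real.sinh (2*A - E) = 2*j/k - 1)
    (hB : Real.sinh (2*B - E) = 2*(j-1)/k - 1) :
    Real.sinh (A-B) * Real.cosh (E - (A-B)) / 2 - 1/(2*k) =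
      Real.sinh (A-B) * (Real.sinh B * Real.sinh (E - A)) := by
  have hqA := Real.cosh_sq A
  have hqB := Real.cosh_sq B
  simp only [Real.sinh_sub, Real.cosh_sub, Real.sinh_two_mul, Real.cosh_two_mul] at hA hB ⊢
  linear_combination ((1/4 : ℝ)) * hA + ((-1/4 : ℝ)) * hB + ((-1/2)*Real.sinh B*Real.cosh B*Real.cosh E + (1/2)*Real.sinh B*Real.sinh B*Real.sinh E + (1/4)*Real.sinh E) * hqA + ((1/2)*Real.sinh A*Real.cosh A*Real.cosh E + (-1/2)*Real.sinh A*Real.sinh A*Real.sinh E + (-1/4)*Real.sinh E) * hqB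

lemma key_v (E A B k j : ℝ) (hE : Real.sinh E = 1)
    (hA : Real.sinh (2*A - E) = 2*j/k - 1)
    (hB : Real.sinh (2*B - E) = 2*(j-1)/k - 1) :
    (j-1)/k - Real.sinh (A-B) * Real.cosh (E - (A-B)) / 2 + 1/(2*k) =
      Real.cosh (A-B) * (Real.sinh B * Real.cosh (E - A)) := by
  have hqA := Real.cosh_sq A
  have hqB := Real.cosh_sq B
  simp only [Real.sinh_sub, Real.cosh_sub, Real.sinh_two_mul, Real.cosh_two_mul] at hA hB ⊢
  linear_combination ((-1/4 : ℝ)) * hA + ((-1/4 : ℝ)) * hB + ((-1/2 : ℝ)) * hE + ((-1/2)*Real.sinh B*Real.cosh B*Real.cosh E + (1/2)*Real.sinh B*Real.sinh B*Real.sinh E + (-1/4)*Real.sinh E) * hqA + ((-1/2)*Real.sinh A*Real.cosh A*Real.cosh E + (1/2)*Real.sinh A*Real.sinh A*Real.sinh E + (-1/4)*Real.sinh E) * hqB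

lemma key_w (E A B k j : ℝ)
    (hA : Real.sinh (2*A - E) = 2*j/k - 1)
    (hB : Real.sinh (2*B - E) = 2*(j-1)/k - 1) :
    Real.sinh (A-B) * Real.cosh (E - (A-B)) / 2 + 1/(2*k) =
      Real.sinh (A-B) * (Real.cosh B * Real.cosh (E - A)) := by
  have hqA := Real.cosh_sq A
  have hqB := Real.cosh_sq B
  simp only [Real.sinh_sub, Real.cosh_sub, Real.sinh_two_mul, Real.cosh_two_mul] at hA hB ⊢
  linear_combination ((-1/4 : ℝ)) * hA + ((1/4 : ℝ)) * hB + ((1/2)*Real.sinh B*Real.cosh B*Real.cosh E + (-1/2)*Real.sinh B*Real.sinh B*Real.sinh E + (-1/4)*Real.sinh E) * hqA + ((-1/2)*Real.sinh A*Real.cosh A*Real.cosh E + (1/2)*Real.sinh A*Real.sinh A*Real.sinh E + (1/4)*Real.sinh E) * hqB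

lemma key_z (E A B k j : ℝ) (hE : Real.sinh E = 1)
    (hA : Real.sinh (2*A - E) = 2*j/k - 1)
    (hB : Real.sinh (2*B - E) = 2*(j-1)/k - 1) :
    1 - (j-1)/k - Real.sinh (A-B) * Real.cosh (E - (A-B)) / 2 - 1/(2*k) =
      Real.cosh (A-B) * (Real.cosh B * Real.sinh (E - A)) := by
  have hqA := Real.cosh_sq A
  have hqB := Real.cosh_sq B
  simp only [Real.sinh_sub, Real.cosh_sub, Real.sinh_two_mul, Real.cosh_two_mul] at hA hB ⊢
  linear_combination ((1/4 : ℝ)) * hA + ((1/4 : ℝ)) * hB + ((-1/2 : ℝ)) * hE + ((1/2)*Real.sinh B*Real.cosh B*Real.cosh E + (1/2)*Real.sinh B*Real.sinh B*Real.sinh E + (-1)*Real.cosh B*Real.cosh B*Real.sinh E + (1/4)*Real.sinh E) * hqA + ((1/2)*Real.sinh A*Real.cosh A*Real.cosh E + (-1/2)*Real.sinh A*Real.sinh A*Real.sinh E + (-3/4)*Real.sinh E) * hqB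

lemma key_t1 (E A k j : ℝ) (hE : Real.sinh E = 1)
    (hA : Real.sinh (2*A - E) = 2*j/k - 1) :
    Real.sinh A * Real.cosh (E - A) = j/k := by
  have hqA := Real.cosh_sq A
  simp only [Real.sinh_sub, Real.cosh_sub, Real.sinh_two_mul, Real.cosh_two_mul] at hA ⊢
  linear_combination ((1/2 : ℝ)) * hA + ((1/2 : ℝ)) * hE + ((1/2)*Real.sinh E) * hqA

lemma key_t2 (E A k j : ℝ) (hE : Real.sinh E = 1)
    (hA : Real.sinh (2*A - E) = 2*j/k - 1) :
    Real.cosh A * Real.sinh (E - A) = 1 - j/k := by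
  have hqA := Real.cosh_sq A
  simp only [Real.sinh_sub, Real.cosh_sub, Real.sinh_two_mul, Real.cosh_two_mul] at hA ⊢
  linear_combination ((-1/2 : ℝ)) * hA + ((1/2 : ℝ)) * hE + ((1/2)*Real.sinh E) * hqA

lemma rpow_add_nonneg {x p q : ℝ} (hx : 0 ≤ x) (hp : 0 ≤ p) (hq : 0 ≤ q) :
    x ^ (p + q) = x ^ p * x ^ q := by
  rcases eq_or_ne (p + q) 0 with h | h
  · have hp0 : p = 0 := by linarith
    have hq0 : q = 0 := by linarith
    simp [hp0, hq0]
  · exact Real.rpow_add' hx h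

lemma rpow_pos_cond {x y : ℝ} (hx : 0 ≤ x) (h : x = 0 → y = 0) : 0 < x ^ y := by
  rcases hx.eq_or_lt with h0 | h0
  · rw [← h0, h h0.symm, Real.rpow_zero]
    norm_num
  · exact Real.rpow_pos_of_pos h0 y

noncomputable def Gfn (K i : ℕ) : ℝ :=
  Real.sinh (abar K i * groundE) ^ ((i : ℝ) / (K : ℝ)) *
    Real.cosh (abar K i * groundE) ^ (1 - (i : ℝ) / (K : ℝ)) /
    (phiFun ((i : ℝ) / (K : ℝ)) * phiFun (1 - (i : ℝ) / (K : ℝ)))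

lemma Gfn_zero (K : ℕ) : Gfn K 0 = 1 := by
  unfold Gfn phiFun
  simp [abar_zero]

lemma Gfn_top (K : ℕ) (hK : 0 < K) : Gfn K K = 1 := by
  unfold Gfn phiFun
  have hKne : (K : ℝ) ≠ 0 := Nat.cast_ne_zero.mpr hK.ne'
  rw [abar_K K hK, div_self hKne, one_mul, sinh_groundE]
  norm_num [Real.one_rpow, Real.rpow_zero]

set_option maxHeartbeats 2000000 in
lemma step (K j : ℕ) (hK : 0 < K) (h1 : 1 ≤ j) (hjK : j ≤ K) :
    gFun K j (dNum K j) * Gfn K (j - 1) = Gfn K j := by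
  have hKR : (0:ℝ) < (K:ℝ) := by exact_mod_cast hK
  have hjR : (1:ℝ) ≤ (j:ℝ) := by exact_mod_cast h1
  have hjKR : (j:ℝ) ≤ (K:ℝ) := by exact_mod_cast hjK
  have hEpos := groundE_pos
  have hsE := sinh_groundE
  have hcast : ((j - 1 : ℕ) : ℝ) = (j : ℝ) - 1 := by
    have := Nat.cast_sub (R := ℝ) h1
    simpa using this
  have hA : Real.sinh (2 * (abar K j * groundE) - groundE) = 2 * (j : ℝ) / (K : ℝ) - 1 := sinh_abar K j
  have hB : Real.sinh (2 * (abar K (j - 1) * groundE) - groundE) = 2 * ((j : ℝ) - 1) / (K : ℝ) - 1 := by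
    have h := sinh_abar K (j - 1)
    rw [hcast] at h
    exact h
  have hAB : aseq K j * groundE = (abar K j * groundE) - (abar K (j - 1) * groundE) := by
    unfold aseq; ring
  have hABc : (1 - aseq K j) * groundE = groundE - ((abar K j * groundE) - (abar K (j - 1) * groundE)) := by
    unfold aseq; ring
  have hdval : dNum K j = Real.sinh ((abar K j * groundE) - (abar K (j - 1) * groundE)) * Real.cosh (groundE - ((abar K j * groundE) - (abar K (j - 1) * groundE))) := by
    unfold dNum
    rw [hAB, hABc]
  have hmono : abar K (j - 1) < abar K j := abar_strict K hK (by omega)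
  have habnn : 0 ≤ abar K (j - 1) := abar_nonneg K (j - 1)
  have hab1 : abar K j ≤ 1 := abar_le_one K hK hjK
  have hApos : 0 < (abar K j * groundE) := by nlinarith
  have hBnn : 0 ≤ (abar K (j - 1) * groundE) := by nlinarith
  have hABpos : 0 < (abar K j * groundE) - (abar K (j - 1) * groundE) := by nlinarith
  have hAle : (abar K j * groundE) ≤ groundE := by nlinarith
  have hspos : 0 < Real.sinh ((abar K j * groundE) - (abar K (j - 1) * groundE)) := Real.sinh_pos_iff.mpr hABpos
  have hcpos : 0 < Real.cosh ((abar K j * groundE) - (abar K (j - 1) * groundE)) := Real.cosh_pos _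
  have hSpnn : 0 ≤ Real.sinh (abar K (j - 1) * groundE) := Real.sinh_nonneg_iff.mpr hBnn
  have hCppos : 0 < Real.cosh (abar K (j - 1) * groundE) := Real.cosh_pos _
  have hSpos : 0 < Real.sinh (abar K j * groundE) := Real.sinh_pos_iff.mpr hApos
  have hCpos : 0 < Real.cosh (abar K j * groundE) := Real.cosh_pos _
  have hSbnn : 0 ≤ Real.sinh (groundE - (abar K j * groundE)) := Real.sinh_nonneg_iff.mpr (by linarith)
  have hCbpos : 0 < Real.cosh (groundE - (abar K j * groundE)) := Real.cosh_pos _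
  have hu : dNum K j / 2 - 1 / (2 * (K:ℝ)) = (Real.sinh ((abar K j * groundE) - (abar K (j - 1) * groundE)) * (Real.sinh (abar K (j - 1) * groundE) * Real.sinh (groundE - (abar K j * groundE)))) := by
    rw [hdval]
    exact key_u groundE (abar K j * groundE) (abar K (j - 1) * groundE) (K:ℝ) (j:ℝ) hA hB
  have hv : ((j:ℝ) - 1) / (K:ℝ) - dNum K j / 2 + 1 / (2 * (K:ℝ)) = (Real.cosh ((abar K j * groundE) - (abar K (j - 1) * groundE)) * (Real.sinh (abar K (j - 1) * groundE) * Real.cosh (groundE - (abar K j * groundE)))) := by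
    rw [hdval]
    exact key_v groundE (abar K j * groundE) (abar K (j - 1) * groundE) (K:ℝ) (j:ℝ) hsE hA hB
  have hw : dNum K j / 2 + 1 / (2 * (K:ℝ)) = (Real.sinh ((abar K j * groundE) - (abar K (j - 1) * groundE)) * (Real.cosh (abar K (j - 1) * groundE) * Real.cosh (groundE - (abar K j * groundE)))) := by
    rw [hdval]
    exact key_w groundE (abar K j * groundE) (abar K (j - 1) * groundE) (K:ℝ) (j:ℝ) hA hB
  have hz : 1 - ((j:ℝ) - 1) / (K:ℝ) - dNum K j / 2 - 1 / (2 * (K:ℝ)) = (Real.cosh ((abar K j * groundE) - (abar K (j - 1) * groundE)) * (Real.cosh (abar K (j - 1) * groundE) * Real.sinh (groundE - (abar K j * groundE)))) := by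
    rw [hdval]
    exact key_z groundE (abar K j * groundE) (abar K (j - 1) * groundE) (K:ℝ) (j:ℝ) hsE hA hB
  have hSCb : Real.sinh (abar K j * groundE) * Real.cosh (groundE - (abar K j * groundE)) = (j:ℝ) / (K:ℝ) := key_t1 groundE (abar K j * groundE) (K:ℝ) (j:ℝ) hsE hA
  have hCSb : Real.cosh (abar K j * groundE) * Real.sinh (groundE - (abar K j * groundE)) = 1 - (j:ℝ) / (K:ℝ) := key_t2 groundE (abar K j * groundE) (K:ℝ) (j:ℝ) hsE hA
  have htpCbp : Real.sinh (abar K (j - 1) * groundE) * Real.cosh (groundE - (abar K (j - 1) * groundE)) = ((j:ℝ) - 1) / (K:ℝ) :=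
    key_t1 groundE (abar K (j - 1) * groundE) (K:ℝ) ((j:ℝ) - 1) hsE hB
  have heunn : 0 ≤ (Real.sinh ((abar K j * groundE) - (abar K (j - 1) * groundE)) * (Real.sinh (abar K (j - 1) * groundE) * Real.sinh (groundE - (abar K j * groundE)))) := by positivity
  have hevnn : 0 ≤ (Real.cosh ((abar K j * groundE) - (abar K (j - 1) * groundE)) * (Real.sinh (abar K (j - 1) * groundE) * Real.cosh (groundE - (abar K j * groundE)))) := by positivity
  have hewnn : 0 ≤ (Real.sinh ((abar K j * groundE) - (abar K (j - 1) * groundE)) * (Real.cosh (abar K (j - 1) * groundE) * Real.cosh (groundE - (abar K j * groundE)))) := by positivity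
  have heznn : 0 ≤ (Real.cosh ((abar K j * groundE) - (abar K (j - 1) * groundE)) * (Real.cosh (abar K (j - 1) * groundE) * Real.sinh (groundE - (abar K j * groundE)))) := by positivity
  have htnn : 0 ≤ ((j:ℝ) / (K:ℝ)) := by positivity
  have htpnn : 0 ≤ (((j:ℝ) - 1) / (K:ℝ)) := by
    apply div_nonneg _ hKR.le
    linarith
  have h1tnn : 0 ≤ 1 - ((j:ℝ) / (K:ℝ)) := by
    have : (j:ℝ) / (K:ℝ) ≤ 1 := by
      rw [div_le_one hKR]; exact hjKR
    linarith
  have h1tpnn : 0 ≤ 1 - (((j:ℝ) - 1) / (K:ℝ)) := by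
    have : ((j:ℝ) - 1) / (K:ℝ) ≤ 1 := by
      rw [div_le_one hKR]; linarith
    linarith
  have F1 : Real.sinh ((abar K j * groundE) - (abar K (j - 1) * groundE)) ^ (Real.sinh ((abar K j * groundE) - (abar K (j - 1) * groundE)) * (Real.sinh (abar K (j - 1) * groundE) * Real.sinh (groundE - (abar K j * groundE)))) * Real.sinh ((abar K j * groundE) - (abar K (j - 1) * groundE)) ^ (Real.sinh ((abar K j * groundE) - (abar K (j - 1) * groundE)) * (Real.cosh (abar K (j - 1) * groundE) * Real.cosh (groundE - (abar K j * groundE)))) = Real.sinh ((abar K j * groundE) - (abar K (j - 1) * groundE)) ^ (dNum K j) := by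
    rw [← Real.rpow_add hspos]
    congr 1
    linear_combination -hu - hw
  have F2 : Real.cosh ((abar K j * groundE) - (abar K (j - 1) * groundE)) ^ (Real.cosh ((abar K j * groundE) - (abar K (j - 1) * groundE)) * (Real.sinh (abar K (j - 1) * groundE) * Real.cosh (groundE - (abar K j * groundE)))) * Real.cosh ((abar K j * groundE) - (abar K (j - 1) * groundE)) ^ (Real.cosh ((abar K j * groundE) - (abar K (j - 1) * groundE)) * (Real.cosh (abar K (j - 1) * groundE) * Real.sinh (groundE - (abar K j * groundE)))) = Real.cosh ((abar K j * groundE) - (abar K (j - 1) * groundE)) ^ (1 - dNum K j) := by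
    rw [← Real.rpow_add hcpos]
    congr 1
    linear_combination -hv - hz
  have F3 : Real.sinh (abar K (j - 1) * groundE) ^ (Real.sinh ((abar K j * groundE) - (abar K (j - 1) * groundE)) * (Real.sinh (abar K (j - 1) * groundE) * Real.sinh (groundE - (abar K j * groundE)))) * Real.sinh (abar K (j - 1) * groundE) ^ (Real.cosh ((abar K j * groundE) - (abar K (j - 1) * groundE)) * (Real.sinh (abar K (j - 1) * groundE) * Real.cosh (groundE - (abar K j * groundE)))) = Real.sinh (abar K (j - 1) * groundE) ^ (((j:ℝ) - 1) / (K:ℝ)) := by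
    rw [← rpow_add_nonneg hSpnn heunn hevnn]
    congr 1
    linear_combination -hu - hv
  have F4 : Real.cosh (abar K (j - 1) * groundE) ^ (Real.sinh ((abar K j * groundE) - (abar K (j - 1) * groundE)) * (Real.cosh (abar K (j - 1) * groundE) * Real.cosh (groundE - (abar K j * groundE)))) * Real.cosh (abar K (j - 1) * groundE) ^ (Real.cosh ((abar K j * groundE) - (abar K (j - 1) * groundE)) * (Real.cosh (abar K (j - 1) * groundE) * Real.sinh (groundE - (abar K j * groundE)))) = Real.cosh (abar K (j - 1) * groundE) ^ (1 - (((j:ℝ) - 1) / (K:ℝ))) := by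
    rw [← Real.rpow_add hCppos]
    congr 1
    linear_combination -hw - hz
  have F5 : Real.sinh (groundE - (abar K j * groundE)) ^ (Real.sinh ((abar K j * groundE) - (abar K (j - 1) * groundE)) * (Real.sinh (abar K (j - 1) * groundE) * Real.sinh (groundE - (abar K j * groundE)))) * Real.sinh (groundE - (abar K j * groundE)) ^ (Real.cosh ((abar K j * groundE) - (abar K (j - 1) * groundE)) * (Real.cosh (abar K (j - 1) * groundE) * Real.sinh (groundE - (abar K j * groundE)))) = Real.sinh (groundE - (abar K j * groundE)) ^ (1 - ((j:ℝ) / (K:ℝ))) := by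
    rw [← rpow_add_nonneg hSbnn heunn heznn]
    congr 1
    linear_combination -hu - hz
  have F6 : Real.cosh (groundE - (abar K j * groundE)) ^ (Real.cosh ((abar K j * groundE) - (abar K (j - 1) * groundE)) * (Real.sinh (abar K (j - 1) * groundE) * Real.cosh (groundE - (abar K j * groundE)))) * Real.cosh (groundE - (abar K j * groundE)) ^ (Real.sinh ((abar K j * groundE) - (abar K (j - 1) * groundE)) * (Real.cosh (abar K (j - 1) * groundE) * Real.cosh (groundE - (abar K j * groundE)))) = Real.cosh (groundE - (abar K j * groundE)) ^ ((j:ℝ) / (K:ℝ)) := by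
    rw [← Real.rpow_add hCbpos]
    congr 1
    linear_combination -hv - hw
  have hDen : (Real.sinh ((abar K j * groundE) - (abar K (j - 1) * groundE)) * (Real.sinh (abar K (j - 1) * groundE) * Real.sinh (groundE - (abar K j * groundE)))) ^ (Real.sinh ((abar K j * groundE) - (abar K (j - 1) * groundE)) * (Real.sinh (abar K (j - 1) * groundE) * Real.sinh (groundE - (abar K j * groundE)))) * (Real.cosh ((abar K j * groundE) - (abar K (j - 1) * groundE)) * (Real.sinh (abar K (j - 1) * groundE) * Real.cosh (groundE - (abar K j * groundE)))) ^ (Real.cosh ((abar K j * groundE) - (abar K (j - 1) * groundE)) * (Real.sinh (abar K (j - 1) * groundE) * Real.cosh (groundE - (abar K j * groundE)))) * (Real.sinh ((abar K j * groundE) - (abar K (j - 1) * groundE)) * (Real.cosh (abar K (j - 1) * groundE) * Real.cosh (groundE - (abar K j * groundE)))) ^ (Real.sinh ((abar K j * groundE) - (abar K (j - 1) * groundE)) * (Real.cosh (abar K (j - 1) * groundE) * Real.cosh (groundE - (abar K j * groundE)))) * (Real.cosh ((abar K j * groundE) - (abar K (j - 1) * groundE)) * (Real.cosh (abar K (j -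 1) * groundE) * Real.sinh (groundE - (abar K j * groundE)))) ^ (Real.cosh ((abar K j * groundE) - (abar K (j - 1) * groundE)) * (Real.cosh (abar K (j - 1) * groundE) * Real.sinh (groundE - (abar K j * groundE)))) =
      Real.sinh ((abar K j * groundE) - (abar K (j - 1) * groundE)) ^ (dNum K j) * Real.cosh ((abar K j * groundE) - (abar K (j - 1) * groundE)) ^ (1 - dNum K j) * (Real.sinh (abar K (j - 1) * groundE) ^ (((j:ℝ) - 1) / (K:ℝ)) * Real.cosh (abar K (j - 1) * groundE) ^ (1 - (((j:ℝ) - 1) / (K:ℝ)))) *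
        (Real.sinh (groundE - (abar K j * groundE)) ^ (1 - ((j:ℝ) / (K:ℝ))) * Real.cosh (groundE - (abar K j * groundE)) ^ ((j:ℝ) / (K:ℝ))) := by
    rw [Real.mul_rpow hspos.le (by positivity), Real.mul_rpow hSpnn hSbnn,
      Real.mul_rpow hcpos.le (by positivity), Real.mul_rpow hSpnn hCbpos.le,
      Real.mul_rpow hspos.le (by positivity), Real.mul_rpow hCppos.le hCbpos.le,
      Real.mul_rpow hcpos.le (by positivity), Real.mul_rpow hCppos.le hSbnn,
      ← F1, ← F2, ← F3, ← F4, ← F5, ← F6]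
    ring
  have hX : Real.sinh (groundE - (abar K j * groundE)) ^ (1 - ((j:ℝ) / (K:ℝ))) * Real.cosh (groundE - (abar K j * groundE)) ^ ((j:ℝ) / (K:ℝ)) =
      (1 - ((j:ℝ) / (K:ℝ))) ^ (1 - ((j:ℝ) / (K:ℝ))) * ((j:ℝ) / (K:ℝ)) ^ ((j:ℝ) / (K:ℝ)) / (Real.cosh (abar K j * groundE) ^ (1 - ((j:ℝ) / (K:ℝ))) * Real.sinh (abar K j * groundE) ^ ((j:ℝ) / (K:ℝ))) := by
    have hCb : Real.cosh (groundE - (abar K j * groundE)) = (((j:ℝ) / (K:ℝ))) / Real.sinh (abar K j * groundE) := by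
      rw [eq_div_iff hSpos.ne']
      linear_combination hSCb
    have hSb : Real.sinh (groundE - (abar K j * groundE)) = (1 - ((j:ℝ) / (K:ℝ))) / Real.cosh (abar K j * groundE) := by
      rw [eq_div_iff hCpos.ne']
      linear_combination hCSb
    rw [hCb, hSb, Real.div_rpow h1tnn hCpos.le, Real.div_rpow htnn hSpos.le]
    ring
  have hsd : 0 < Real.sinh ((abar K j * groundE) - (abar K (j - 1) * groundE)) ^ (dNum K j) := Real.rpow_pos_of_pos hspos _
  have hcd : 0 < Real.cosh ((abar K j * groundE) - (abar K (j - 1) * groundE)) ^ (1 - dNum K j) := Real.rpow_pos_of_pos hcpos _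
  have hSptp : 0 < Real.sinh (abar K (j - 1) * groundE) ^ (((j:ℝ) - 1) / (K:ℝ)) := by
    apply rpow_pos_cond hSpnn
    intro h0
    rw [h0, zero_mul] at htpCbp
    linarith [htpCbp]
  have hCptp : 0 < Real.cosh (abar K (j - 1) * groundE) ^ (1 - (((j:ℝ) - 1) / (K:ℝ))) := Real.rpow_pos_of_pos hCppos _
  have hSt : 0 < Real.sinh (abar K j * groundE) ^ ((j:ℝ) / (K:ℝ)) := Real.rpow_pos_of_pos hSpos _
  have hCt : 0 < Real.cosh (abar K j * groundE) ^ (1 - ((j:ℝ) / (K:ℝ))) := Real.rpow_pos_of_pos hCpos _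
  have hp1 : 0 < ((j:ℝ) / (K:ℝ)) ^ ((j:ℝ) / (K:ℝ)) := rpow_pos_cond htnn (fun h => h)
  have hp2 : 0 < (1 - ((j:ℝ) / (K:ℝ))) ^ (1 - ((j:ℝ) / (K:ℝ))) := rpow_pos_cond h1tnn (fun h => h)
  have hp3 : 0 < (((j:ℝ) - 1) / (K:ℝ)) ^ (((j:ℝ) - 1) / (K:ℝ)) := rpow_pos_cond htpnn (fun h => h)
  have hp4 : 0 < (1 - (((j:ℝ) - 1) / (K:ℝ))) ^ (1 - (((j:ℝ) - 1) / (K:ℝ))) := rpow_pos_cond h1tpnn (fun h => h)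
  unfold gFun Gfn phiFun
  rw [hcast, hAB, hu, hv, hw, hz, hDen, hX]
  set a1 := Real.sinh ((abar K j * groundE) - (abar K (j - 1) * groundE)) ^ (dNum K j) with ha1
  set a2 := Real.cosh ((abar K j * groundE) - (abar K (j - 1) * groundE)) ^ (1 - dNum K j) with ha2
  set a3 := Real.sinh (abar K (j - 1) * groundE) ^ (((j:ℝ) - 1) / (K:ℝ)) with ha3
  set a4 := Real.cosh (abar K (j - 1) * groundE) ^ (1 - (((j:ℝ) - 1) / (K:ℝ))) with ha4
  set a5 := Real.sinh (abar K j * groundE) ^ ((j:ℝ) / (K:ℝ)) with ha5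
  set a6 := Real.cosh (abar K j * groundE) ^ (1 - ((j:ℝ) / (K:ℝ))) with ha6
  set b1 := ((j:ℝ) / (K:ℝ)) ^ ((j:ℝ) / (K:ℝ)) with hb1
  set b2 := (1 - ((j:ℝ) / (K:ℝ))) ^ (1 - ((j:ℝ) / (K:ℝ))) with hb2
  set b3 := (((j:ℝ) - 1) / (K:ℝ)) ^ (((j:ℝ) - 1) / (K:ℝ)) with hb3
  set b4 := (1 - (((j:ℝ) - 1) / (K:ℝ))) ^ (1 - (((j:ℝ) - 1) / (K:ℝ))) with hb4
  field_simp

lemma prod_eq (K : ℕ) (hK : 0 < K) :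
    ∀ i, i ≤ K → ∏ j ∈ Finset.Icc 1 i, gFun K j (dNum K j) = Gfn K i := by
  intro i
  induction i with
  | zero =>
    intro _
    rw [show Finset.Icc 1 0 = (∅ : Finset ℕ) from Finset.Icc_eq_empty (by omega),
      Finset.prod_empty, Gfn_zero]
  | succ n ih =>
    intro h
    rw [Finset.prod_Icc_succ_top (by omega : 1 ≤ n + 1), ih (by omega)]
    have hstep := step K (n + 1) hK (by omega) h
    rw [Nat.add_sub_cancel] at hstep
    rw [mul_comm]
    exact hstep

theorem evolution_lemma (K : ℕ) (hK : 1 ≤ K) :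
    (∀ i : ℕ, 1 ≤ i → i ≤ K - 1 →
      ∏ j ∈ Finset.Icc 1 i, gFun K j (dNum K j) =
        (Real.sinh (abar K i * groundE) / ((i : ℝ) / (K : ℝ))) ^ ((i : ℝ) / (K : ℝ)) *
          (Real.cosh (abar K i * groundE) / (1 - (i : ℝ) / (K : ℝ))) ^
            (1 - (i : ℝ) / (K : ℝ))) ∧
    ∏ j ∈ Finset.Icc 1 K, gFun K j (dNum K j) = 1 := by
  have hK0 : 0 < K := hK
  have hKR : (0:ℝ) < (K:ℝ) := by exact_mod_cast hK0
  constructor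
  · intro i hi1 hi2
    rw [prod_eq K hK0 i (by omega)]
    have hSnn : 0 ≤ Real.sinh (abar K i * groundE) :=
      Real.sinh_nonneg_iff.mpr (mul_nonneg (abar_nonneg K i) groundE_pos.le)
    have hCnn : 0 ≤ Real.cosh (abar K i * groundE) := (Real.cosh_pos _).le
    have htnn : 0 ≤ (i:ℝ) / (K:ℝ) := by positivity
    have h1tnn : 0 ≤ 1 - (i:ℝ) / (K:ℝ) := by
      have hiK : (i:ℝ) ≤ (K:ℝ) := by
        have : i ≤ K := by omega
        exact_mod_cast this
      have : (i:ℝ) / (K:ℝ) ≤ 1 := by rw [div_le_one hKR]; exact hiK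
      linarith
    have hp1 : 0 < ((i:ℝ) / (K:ℝ)) ^ ((i:ℝ) / (K:ℝ)) := rpow_pos_cond htnn (fun h => h)
    have hp2 : 0 < (1 - (i:ℝ) / (K:ℝ)) ^ (1 - (i:ℝ) / (K:ℝ)) := rpow_pos_cond h1tnn (fun h => h)
    unfold Gfn phiFun
    rw [Real.div_rpow hSnn htnn, Real.div_rpow hCnn h1tnn]
    field_simp
  · rw [prod_eq K hK0 K le_rfl, Gfn_top K hK0]
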